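/- Let C ⊂ ℝ^d be finite with empirical mean μ and variance σ² = (1/(|C|d))∑_{x∈C}‖x−μ‖² > 0. Suppose μ̃ satisfies ∑_{x∈C}‖x−μ̃‖² ≤ (1+ε)∑_{x∈C}‖x−μ‖², and σ̃² ≥ σ² with ln(σ̃²) − ln(σ²) ≤ ((1+ε)²−1)·(2/(|C|d))·OPT(C,1), where OPT(C,1) = (|C|d/2)(ln(2πσ²)+1) ≥ (|C|d/2). Then (|C|d/2)ln(2πσ̃²) + (1/(2σ̃²))∑_{x∈C}‖x−μ̃‖² ≤ (1+ε)³·OPT(C,1). -/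

import Mathlib

open Finset Real

theorem approx_params_single_cluster_cost_bound
    {d : ℕ} (hd : 1 ≤ d) (C : Finset (EuclideanSpace ℝ (Fin d)))
    (μ : EuclideanSpace ℝ (Fin d)) (hμ : μ = (C.card : ℝ)⁻¹ • ∑ x ∈ C, x)
    (σ2 : ℝ) (hσ2 : σ2 = (1 / ((C.card : ℝ) * d)) * ∑ x ∈ C, ‖x - μ‖ ^ 2)
    (hσ2pos : 0 < σ2)
    (OPT : ℝ) (hOPT : OPT = ((C.card : ℝ) * d / 2) * (Real.log (2 * π * σ2) + 1))
    (hOPTlb : (C.card : ℝ) * d / 2 ≤ OPT)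
    (ε : ℝ) (hε : 0 ≤ ε)
    (μt : EuclideanSpace ℝ (Fin d))
    (hμt : ∑ x ∈ C, ‖x - μt‖ ^ 2 ≤ (1 + ε) * ∑ x ∈ C, ‖x - μ‖ ^ 2)
    (σt2 : ℝ) (hσt2 : σ2 ≤ σt2)
    (hσt2log : Real.log σt2 - Real.log σ2
        ≤ ((1 + ε) ^ 2 - 1) * (2 / ((C.card : ℝ) * d)) * OPT) :
    ((C.card : ℝ) * d / 2) * Real.log (2 * π * σt2)
        + (1 / (2 * σt2)) * ∑ x ∈ C, ‖x - μt‖ ^ 2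
      ≤ (1 + ε) ^ 3 * OPT := by
  set n : ℝ := (C.card : ℝ) * d with hn
  have hσt2pos : 0 < σt2 := lt_of_lt_of_le hσ2pos hσt2
  have hnpos : 0 < n := by
    rcases C.eq_empty_or_nonempty with h | h
    · exfalso; rw [h] at hσ2; simp at hσ2; linarith
    · have : 0 < (C.card : ℝ) := by exact_mod_cast h.card_pos
      have : (0:ℝ) < d := by exact_mod_cast hd
      positivity
  have hS : ∑ x ∈ C, ‖x - μ‖ ^ 2 = n * σ2 := by
    rw [hσ2]; field_simp
  have hlog2 : Real.log (2 * π * σt2) ≤ Real.log (2 * π * σ2)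
      + ((1 + ε) ^ 2 - 1) * (2 / n) * OPT := by
    have h1 : Real.log (2 * π * σt2) = Real.log (2 * π) + Real.log σt2 :=
      Real.log_mul (by positivity) (ne_of_gt hσt2pos)
    have h2 : Real.log (2 * π * σ2) = Real.log (2 * π) + Real.log σ2 :=
      Real.log_mul (by positivity) (ne_of_gt hσ2pos)
    rw [h1, h2]; linarith
  have hterm2 : (1 / (2 * σt2)) * ∑ x ∈ C, ‖x - μt‖ ^ 2 ≤ (1 + ε) * n / 2 := by
    have h1 : (1 / (2 * σt2)) * ∑ x ∈ C, ‖x - μt‖ ^ 2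
        ≤ (1 / (2 * σt2)) * ((1 + ε) * (n * σ2)) := by
      apply mul_le_mul_of_nonneg_left _ (by positivity)
      rw [← hS]; exact hμt
    have h2 : (1 / (2 * σt2)) * ((1 + ε) * (n * σ2)) ≤ (1 + ε) * n / 2 := by
      rw [div_mul_eq_mul_div, one_mul, div_le_div_iff₀ (by positivity) (by norm_num)]
      nlinarith [mul_nonneg (mul_nonneg (by linarith : (0:ℝ) ≤ 1 + ε) hnpos.le)
        (sub_nonneg.mpr hσt2)]
    linarith
  have hterm1 : (n / 2) * Real.log (2 * π * σt2)
      ≤ (OPT - n / 2) + ((1 + ε) ^ 2 - 1) * OPT := by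
    have h1 : (n / 2) * Real.log (2 * π * σt2)
        ≤ (n / 2) * (Real.log (2 * π * σ2) + ((1 + ε) ^ 2 - 1) * (2 / n) * OPT) :=
      mul_le_mul_of_nonneg_left hlog2 (by linarith)
    have h2 : (n / 2) * (((1 + ε) ^ 2 - 1) * (2 / n) * OPT)
        = ((1 + ε) ^ 2 - 1) * OPT := by
      field_simp
    have h3 : (n / 2) * Real.log (2 * π * σ2) = OPT - n / 2 := by
      rw [hOPT]; ring
    nlinarith [h1]
  have hOPTpos : 0 < OPT := lt_of_lt_of_le (by linarith) hOPTlb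
  have hA : ε * (n / 2) ≤ ε * OPT := mul_le_mul_of_nonneg_left hOPTlb hε
  have hB : 0 ≤ ε * ((2 * ε + ε ^ 2) * OPT) := by positivity
  have e1 : (1 + ε) ^ 2 = 1 + 2 * ε + ε ^ 2 := by ring
  have e2 : (1 + ε) ^ 3 = 1 + 3 * ε + 3 * ε ^ 2 + ε ^ 3 := by ring
  linarith [hterm1, hterm2]
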